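/- For the 2×2 reflectionless Riemann–Hilbert data with n = 1, the solution formula q₁ = −2i det(T₁)/det(N) with N = ⟨v̂₁|v₁⟩/(λ₁ − λ₁*) and T₁ the 2×2 bordered matrix, evaluated with ⟨v̂₁| = |v₁⟩†, reduces exactly to the sech expression q₁(x,t) = 2b₁γ₂₁*(γ₁₁*√g₁)⁻¹ e^{f₂} sech(f₁). -/

import Mathlib

open Complex Real Matrix

set_option maxHeartbeats 1600000

/-- For `n = 1` reflectionless Riemann–Hilbert data, the formula
`q₁ = −2i det(T₁)/det(N)` with `N = ⟨v̂₁|v₁⟩/(λ₁ − λ₁*)` and `T₁` the bordered matrix,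
evaluated with `⟨v̂₁| = |v₁⟩†`, reduces exactly to the sech expression
`q₁ = 2b₁ γ₂₁* (γ₁₁* √g₁)⁻¹ e^{f₂} sech f₁`. -/
theorem stmt_18 (a₁ b₁ α ε x t : ℝ) (hb : 0 < b₁) (hε : ε ∈ Set.Ico (0:ℝ) 1)
    (γ₁₁ γ₂₁ γ₃₁ : ℂ) (h11 : γ₁₁ ≠ 0) (h23 : (γ₂₁, γ₃₁) ≠ 0)
    (lam : ℂ) (hlam : lam = ⟨a₁, b₁⟩)
    (θ : ℂ)
    (hθ : θ = lam * (x : ℂ)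
      + 2 * (1 + 4 * (α : ℂ) * lam) * lam ^ 2
        * (((4:ℝ) ^ ε * (a₁ ^ 2 + b₁ ^ 2) ^ ε : ℝ) : ℂ) * (t : ℂ))
    (v : Fin 3 → ℂ)
    (hv : v = ![Complex.exp (-(Complex.I * lam * x)) * γ₁₁,
      Complex.exp (Complex.I * θ) * γ₂₁, Complex.exp (Complex.I * θ) * γ₃₁])
    (N : ℂ) (hN : N = (∑ i : Fin 3, starRingEnd ℂ (v i) * v i) / (lam - starRingEnd ℂ lam))
    (T₁ : Matrix (Fin 2) (Fin 2) ℂ)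
    (hT₁ : T₁ = !![N, -(starRingEnd ℂ (Complex.exp (Complex.I * θ)) * starRingEnd ℂ γ₂₁);
      Complex.exp (-(Complex.I * lam * x)) * γ₁₁, 0])
    (g₁ : ℝ)
    (hg : g₁ = (‖γ₂₁‖ ^ 2 + ‖γ₃₁‖ ^ 2) / ‖γ₁₁‖ ^ 2)
    (f₁ : ℝ)
    (hf₁ : f₁ = 2 * b₁ * x
      + (4:ℝ) ^ (1 + ε) * b₁ * (a₁ + 2 * α * (3 * a₁ ^ 2 - b₁ ^ 2)) * (a₁ ^ 2 + b₁ ^ 2) ^ ε * t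
      - Real.log (Real.sqrt g₁))
    (f₂ : ℂ)
    (hf₂ : f₂ = ((-(2 * a₁ * x)
      - (2:ℝ) ^ (1 + 2 * ε) * (4 * α * a₁ * (a₁ ^ 2 - 3 * b₁ ^ 2) + (a₁ ^ 2 - b₁ ^ 2))
          * (a₁ ^ 2 + b₁ ^ 2) ^ ε * t : ℝ) : ℂ) * Complex.I) :
    -2 * Complex.I * T₁.det / N
      = (2 * b₁ : ℂ) * starRingEnd ℂ γ₂₁ * ((starRingEnd ℂ γ₁₁) * (Real.sqrt g₁ : ℂ))⁻¹
        * Complex.exp f₂ * ((1 / Real.cosh f₁ : ℝ) : ℂ) := by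
  -- abbreviations
  set r : ℝ := ‖γ₁₁‖ with hrdef
  set G : ℝ := ‖γ₂₁‖ ^ 2 + ‖γ₃₁‖ ^ 2 with hGdef
  set P : ℝ := 4 * ((4:ℝ)^ε * (a₁^2+b₁^2)^ε) * b₁ * (a₁ + 2*α*(3*a₁^2 - b₁^2)) * t with hPdef
  set s : ℝ := Real.sqrt g₁ with hsdef
  have hr : 0 < r := norm_pos_iff.mpr h11
  have hGpos : 0 < G := by
    rcases (by simpa [Prod.ext_iff] using h23 : ¬(γ₂₁ = 0 ∧ γ₃₁ = 0)) with h
    rcases not_and_or.mp h with h2 | h3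
    · have := norm_pos_iff.mpr h2; positivity
    · have := norm_pos_iff.mpr h3; positivity
  have hg1pos : 0 < g₁ := by rw [hg]; positivity
  have hspos : 0 < s := Real.sqrt_pos.mpr hg1pos
  have hs2 : s^2 * r^2 = G := by
    rw [hsdef, Real.sq_sqrt hg1pos.le, hg]
    field_simp
  -- exponent identities
  have hl : lam = (a₁:ℂ) + (b₁:ℂ)*Complex.I := by rw [hlam]; apply Complex.ext <;> simp
  have hlc : starRingEnd ℂ lam = (a₁:ℂ) - (b₁:ℂ)*Complex.I := by
    rw [hl]; apply Complex.ext <;> simp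
  have h2pow : (2:ℝ)^(1+2*ε) = 2*(4:ℝ)^ε := by
    rw [Real.rpow_add (by norm_num), Real.rpow_one, Real.rpow_mul (by norm_num)]
    norm_num
  have h4pow : (4:ℝ)^(1+ε) = 4*(4:ℝ)^ε := by
    rw [Real.rpow_add (by norm_num), Real.rpow_one]
  have harg1 : starRingEnd ℂ (-(Complex.I*lam*x)) + -(Complex.I*lam*x) = ((2*b₁*x : ℝ):ℂ) := by
    rw [map_neg, _root_.map_mul, _root_.map_mul, Complex.conj_I, Complex.conj_ofReal, hlc, hl]
    push_cast
    linear_combination (-(2:ℂ)*b₁*x) * Complex.I_mul_I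
  have harg2 : starRingEnd ℂ (Complex.I*θ) + Complex.I*θ = ((-(2*b₁*x + 2*P) : ℝ):ℂ) := by
    rw [hθ, hl, hPdef]
    apply Complex.ext <;>
      simp [pow_two, Complex.add_re, Complex.add_im, Complex.mul_re, Complex.mul_im,
        Complex.ofReal_re, Complex.ofReal_im, Complex.I_re, Complex.I_im] <;>
      ring
  have harg3 : starRingEnd ℂ (Complex.I*θ) + -(Complex.I*lam*x) = f₂ + ((-P : ℝ):ℂ) := by
    rw [hθ, hl, hPdef, hf₂, h2pow]
    apply Complex.ext <;>
      simp [pow_two, Complex.add_re, Complex.add_im, Complex.mul_re, Complex.mul_im,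
        Complex.ofReal_re, Complex.ofReal_im, Complex.I_re, Complex.I_im] <;>
      ring
  -- value of N
  have hNval : N = (((r^2 * Real.exp (2*b₁*x) + G * Real.exp (-(2*b₁*x + 2*P)) : ℝ)):ℂ)
      / (2*Complex.I*b₁) := by
    have c1 : starRingEnd ℂ γ₁₁ * γ₁₁ = ((‖γ₁₁‖ ^2 : ℝ) : ℂ) := by
      rw [← Complex.normSq_eq_conj_mul_self, Complex.sq_norm]
    have c2 : starRingEnd ℂ γ₂₁ * γ₂₁ = ((‖γ₂₁‖ ^2 : ℝ) : ℂ) := by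
      rw [← Complex.normSq_eq_conj_mul_self, Complex.sq_norm]
    have c3 : starRingEnd ℂ γ₃₁ * γ₃₁ = ((‖γ₃₁‖ ^2 : ℝ) : ℂ) := by
      rw [← Complex.normSq_eq_conj_mul_self, Complex.sq_norm]
    have t0 : starRingEnd ℂ (Complex.exp (-(Complex.I*lam*x)) * γ₁₁)
        * (Complex.exp (-(Complex.I*lam*x)) * γ₁₁)
        = ((‖γ₁₁‖^2 * Real.exp (2*b₁*x) : ℝ):ℂ) := by
      rw [_root_.map_mul, ← Complex.exp_conj, mul_mul_mul_comm, ← Complex.exp_add, harg1, c1,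
        ← Complex.ofReal_exp]
      norm_cast
      ring
    have t1 : starRingEnd ℂ (Complex.exp (Complex.I*θ) * γ₂₁) * (Complex.exp (Complex.I*θ) * γ₂₁)
        = ((‖γ₂₁‖^2 * Real.exp (-(2*b₁*x + 2*P)) : ℝ):ℂ) := by
      rw [_root_.map_mul, ← Complex.exp_conj, mul_mul_mul_comm, ← Complex.exp_add, harg2, c2,
        ← Complex.ofReal_exp]
      norm_cast
      ring
    have t2 : starRingEnd ℂ (Complex.exp (Complex.I*θ) * γ₃₁) * (Complex.exp (Complex.I*θ) * γ₃₁)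
        = ((‖γ₃₁‖^2 * Real.exp (-(2*b₁*x + 2*P)) : ℝ):ℂ) := by
      rw [_root_.map_mul, ← Complex.exp_conj, mul_mul_mul_comm, ← Complex.exp_add, harg2, c3,
        ← Complex.ofReal_exp]
      norm_cast
      ring
    rw [hN, hv, Fin.sum_univ_three]
    simp only [Matrix.cons_val_zero, Matrix.cons_val_one, Matrix.head_cons,
      Matrix.cons_val_two, Matrix.tail_cons]
    rw [t0, t1, t2, hlc, hl, hGdef, hrdef]
    push_cast
    ring
  -- value of det
  have hdet : T₁.det = Complex.exp f₂ * ((Real.exp (-P) : ℝ):ℂ) * (starRingEnd ℂ γ₂₁ * γ₁₁) := by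
    rw [hT₁, Matrix.det_fin_two_of, ← Complex.exp_conj, mul_zero, zero_sub, neg_mul, neg_neg,
      mul_mul_mul_comm, ← Complex.exp_add, harg3, Complex.exp_add, ← Complex.ofReal_exp]
  -- final computation
  have hγγ : starRingEnd ℂ γ₁₁ * γ₁₁ = ((r^2 : ℝ):ℂ) := by
    rw [← Complex.normSq_eq_conj_mul_self, Complex.sq_norm]
  have hf₁' : f₁ = 2*b₁*x + P - Real.log s := by rw [hf₁, h4pow, hPdef, hsdef]; ring
  have hef : Real.exp f₁ = Real.exp (2*b₁*x) * Real.exp P / s := by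
    rw [hf₁', Real.exp_sub, Real.exp_add, Real.exp_log hspos]
  have hef' : Real.exp (-f₁) = s / (Real.exp (2*b₁*x) * Real.exp P) := by
    rw [Real.exp_neg, hef, inv_div]
  have hexp2 : Real.exp (-(2*b₁*x + 2*P)) = (Real.exp (2*b₁*x) * Real.exp P ^ 2)⁻¹ := by
    rw [Real.exp_neg, show 2*b₁*x + 2*P = 2*b₁*x + (P+P) from by ring, Real.exp_add,
      Real.exp_add, sq]
  have hexpP : Real.exp (-P) = (Real.exp P)⁻¹ := Real.exp_neg P
  rw [hdet, hNval, Real.cosh_eq, hef, hef', hexp2, hexpP]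
  set u : ℝ := Real.exp (2*b₁*x) with hudef
  set w : ℝ := Real.exp P with hwdef
  have hu : 0 < u := Real.exp_pos _
  have hw : 0 < w := Real.exp_pos _
  have hGC : ((s:ℝ):ℂ)^2 * ((r:ℝ):ℂ)^2 = ((G:ℝ):ℂ) := by exact_mod_cast congrArg Complex.ofReal hs2
  have hc11 : starRingEnd ℂ γ₁₁ ≠ 0 := by simpa using h11
  have hb' : (b₁:ℂ) ≠ 0 := by exact_mod_cast hb.ne'
  have hD : (0:ℝ) < r^2*u + G*(u*w^2)⁻¹ := by positivity
  have hC : (0:ℝ) < (u*w/s + s/(u*w))/2 := by positivity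
  push_cast
  rw [div_div_eq_mul_div]
  field_simp
  have hγ₁₁ : γ₁₁ = ((r^2:ℝ):ℂ) / starRingEnd ℂ γ₁₁ := by
    rw [eq_div_iff hc11]
    linear_combination hγγ
  have hii : -(2 * Complex.I * (Complex.exp f₂ * ((starRingEnd ℂ) γ₂₁ * γ₁₁))
        * (2 * Complex.I * (b₁:ℂ)))
      = 4*(b₁:ℂ)*Complex.exp f₂*(starRingEnd ℂ γ₂₁*γ₁₁) := by
    linear_combination (-4*(b₁:ℂ)*Complex.exp f₂*(starRingEnd ℂ γ₂₁*γ₁₁)) * Complex.I_mul_I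
  rw [← hGC, Complex.I_sq]
  have hsne : (s:ℂ) ≠ 0 := by exact_mod_cast hspos.ne'
  have hune : (u:ℂ) ≠ 0 := by exact_mod_cast hu.ne'
  have hwne : (w:ℂ) ≠ 0 := by exact_mod_cast hw.ne'
  have hγγ' : starRingEnd ℂ γ₁₁ * γ₁₁ = ((r:ℝ):ℂ)^2 := by rw [hγγ]; push_cast; ring
  field_simp
  have hrne : (r:ℂ) ≠ 0 := by exact_mod_cast hr.ne'
  rw [mul_assoc (starRingEnd ℂ γ₂₁) γ₁₁, mul_comm γ₁₁, hγγ',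
    mul_comm ((r:ℂ) ^ 2), mul_div_mul_right _ _ (pow_ne_zero 2 hrne)]
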